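/- For every natural number n ≥ 1, the space of injective maps from Fin n to the unit circle S¹ = {z ∈ ℂ : |z| = 1} (i.e. the ordered configuration space of n labeled points on the circle, with the subspace topology from (S¹)ⁿ) has exactly (n-1)! connected components. -/

import Mathlib

open Complex Real Set Function

namespace CircleCfg

/-- Angle coordinate on the circle, cut at `1`: maps the circle to `(0, 2π]`,
continuous away from `1`. -/
noncomputable def g (z : Circle) : ℝ := Complex.arg ((Circle.exp π * z : Circle) : ℂ) + π

lemma exp_g (z : Circle) : Circle.exp (g z) = z := by
  rw [g, Circle.exp_add, Circle.exp_arg]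
  have h2 : Circle.exp π * Circle.exp π = 1 := by
    rw [← Circle.exp_add]
    exact Circle.exp_eq_one.2 ⟨1, by push_cast; ring⟩
  calc Circle.exp π * z * Circle.exp π = Circle.exp π * Circle.exp π * z := mul_right_comm _ _ _
    _ = z := by rw [h2, one_mul]

lemma g_injective : Function.Injective g := fun a b h => by
  rw [← exp_g a, ← exp_g b, h]

lemma g_mem {z : Circle} (hz : z ≠ 1) : g z ∈ Set.Ioo 0 (2 * π) := by
  constructor
  · have := Complex.neg_pi_lt_arg ((Circle.exp π * z : Circle) : ℂ)
    rw [g]; linarith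
  · have hle := Complex.arg_le_pi ((Circle.exp π * z : Circle) : ℂ)
    rcases lt_or_eq_of_le hle with h | h
    · rw [g]; linarith
    · exfalso
      apply hz
      have h1 : Circle.exp π * z = Circle.exp π * 1 := by
        rw [mul_one]
        conv_lhs => rw [← Circle.exp_arg (Circle.exp π * z), h]
      exact mul_left_cancel h1

lemma g_exp {x : ℝ} (hx : x ∈ Set.Ioo 0 (2 * π)) : g (Circle.exp x) = x := by
  have h : Circle.exp π * Circle.exp x = Circle.exp (x - π) := by
    rw [← Circle.exp_add]
    exact Circle.exp_eq_exp.2 ⟨1, by push_cast; ring⟩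
  rw [g, h, Circle.arg_exp (by linarith [hx.1]) (by linarith [hx.2])]
  ring

lemma exp_ne_one {x : ℝ} (hx : x ∈ Set.Ioo 0 (2 * π)) : Circle.exp x ≠ 1 := by
  intro h
  have h1 : g (Circle.exp x) = x := g_exp hx
  rw [h] at h1
  have h2 : g 1 = 2 * π := by
    rw [g, mul_one, Circle.arg_exp (by linarith [Real.pi_pos]) le_rfl]
    ring
  rw [h1] at h2
  linarith [hx.2]

lemma coe_one_ne {z : Circle} (him : (z : ℂ).im = 0) (hre : 0 ≤ (z : ℂ).re) : z = 1 := by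
  have habs : ‖(z : ℂ)‖ = 1 := Circle.norm_coe z
  have hz : (z : ℂ) = ((z : ℂ).re : ℂ) := Complex.ext rfl (by simp [him])
  have : |(z : ℂ).re| = 1 := by
    rw [hz] at habs; simpa using habs
  have : (z : ℂ).re = 1 := by
    rcases abs_cases (z : ℂ).re with ⟨h1, _⟩ | ⟨h1, h2⟩
    · linarith
    · linarith
  ext
  rw [hz, this]; simp

lemma coe_g (z : Circle) : g z = Complex.arg (-(z : ℂ)) + π := by
  have : ((Circle.exp π * z : Circle) : ℂ) = -(z : ℂ) := by
    rw [Circle.coe_mul, Circle.coe_exp]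
    rw [show ((π : ℝ) : ℂ) * Complex.I = (π : ℂ) * Complex.I by norm_cast]
    rw [Complex.exp_pi_mul_I]
    ring
  rw [g, this]

lemma continuousAt_g {z : Circle} (hz : z ≠ 1) : ContinuousAt g z := by
  have heq : g = fun w : Circle => Complex.arg (-(w : ℂ)) + π := funext coe_g
  rw [heq]
  apply ContinuousAt.add _ continuousAt_const
  apply (Complex.continuousAt_arg _).comp
  · exact (continuous_subtype_val.neg).continuousAt
  · rw [Complex.mem_slitPlane_iff_not_le_zero]
    intro hle
    rw [Complex.le_def] at hle
    apply hz
    apply coe_one_ne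
    · have := hle.2; simpa using this
    · have := hle.1; simp at this; linarith


variable {m : ℕ}

/-- Division of the `i+1`-st point by the base point, in angle coordinates. -/
noncomputable def t (x : {x : Fin (m+1) → Circle // Function.Injective x}) (i : Fin m) : ℝ :=
  g (x.1 i.succ / x.1 0)

lemma div_ne_one (x : {x : Fin (m+1) → Circle // Function.Injective x}) (i : Fin m) :
    x.1 i.succ / x.1 0 ≠ 1 := by
  rw [Ne, div_eq_one]
  exact fun h => Fin.succ_ne_zero i (x.2 h)

lemma t_mem (x : {x : Fin (m+1) → Circle // Function.Injective x}) (i : Fin m) :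
    t x i ∈ Set.Ioo 0 (2 * π) := g_mem (div_ne_one x i)

lemma t_inj (x : {x : Fin (m+1) → Circle // Function.Injective x}) :
    Function.Injective (t x) := by
  intro i j h
  have h1 : x.1 i.succ / x.1 0 = x.1 j.succ / x.1 0 := g_injective h
  have h2 : x.1 i.succ = x.1 j.succ := by
    exact div_left_inj.1 h1
  exact Fin.succ_injective m (x.2 h2)

lemma continuous_t (i : Fin m) :
    Continuous fun x : {x : Fin (m+1) → Circle // Function.Injective x} => t x i := by
  rw [continuous_iff_continuousAt]
  intro x
  have hc : Continuous fun x : {x : Fin (m+1) → Circle // Function.Injective x} =>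
      x.1 i.succ / x.1 0 :=
    ((continuous_apply i.succ).comp continuous_subtype_val).div'
      ((continuous_apply (0 : Fin (m+1))).comp continuous_subtype_val)
  have heq : (fun x : {x : Fin (m+1) → Circle // Function.Injective x} => t x i) =
      g ∘ (fun x : {x : Fin (m+1) → Circle // Function.Injective x} => x.1 i.succ / x.1 0) := rfl
  rw [heq]
  exact ContinuousAt.comp (continuousAt_g (div_ne_one x i)) hc.continuousAt

/-- The "chamber" of configurations whose cyclic order (read from the base point) is `σ`. -/
def S (σ : Equiv.Perm (Fin m)) : Set {x : Fin (m+1) → Circle // Function.Injective x} :=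
  {x | StrictMono fun i => t x (σ i)}

lemma exists_S (x : {x : Fin (m+1) → Circle // Function.Injective x}) : ∃ σ, x ∈ S σ :=
  ⟨Tuple.sort (t x), (Tuple.monotone_sort (t x)).strictMono_of_injective
    ((t_inj x).comp (Equiv.injective _))⟩

lemma S_disjoint {σ τ : Equiv.Perm (Fin m)}
    {x : {x : Fin (m+1) → Circle // Function.Injective x}}
    (hσ : x ∈ S σ) (hτ : x ∈ S τ) : σ = τ := by
  have hr : Set.range (fun i => t x (σ i)) = Set.range (fun i => t x (τ i)) := by
    have h1 : Set.range (fun i => t x (σ i)) = Set.range (t x) :=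
      σ.surjective.range_comp (t x)
    have h2 : Set.range (fun i => t x (τ i)) = Set.range (t x) :=
      τ.surjective.range_comp (t x)
    rw [h1, h2]
  have hσ' : StrictMono fun i => t x (σ i) := hσ
  have hτ' : StrictMono fun i => t x (τ i) := hτ
  haveI : WellFoundedLT (Fin m) := inferInstance
  have := (StrictMono.range_inj hσ' hτ').1 hr
  exact Equiv.ext fun i => t_inj x (congrFun this i)

lemma isOpen_S (σ : Equiv.Perm (Fin m)) : IsOpen (S σ) := by
  have hS : S σ = ⋂ p : Fin m × Fin m,
      {x : {x : Fin (m+1) → Circle // Function.Injective x} |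
        p.1 < p.2 → t x (σ p.1) < t x (σ p.2)} := by
    ext x
    simp only [Set.mem_iInter, Set.mem_setOf_eq]
    exact ⟨fun h p hp => h hp, fun h a b hab => h (a, b) hab⟩
  rw [hS]
  apply isOpen_iInter_of_finite
  intro p
  by_cases hp : p.1 < p.2
  · have : {x : {x : Fin (m+1) → Circle // Function.Injective x} |
        p.1 < p.2 → t x (σ p.1) < t x (σ p.2)} =
        {x | t x (σ p.1) < t x (σ p.2)} := by
      ext x; simp [hp]
    rw [this]
    exact isOpen_lt (continuous_t _) (continuous_t _)
  · have : {x : {x : Fin (m+1) → Circle // Function.Injective x} |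
        p.1 < p.2 → t x (σ p.1) < t x (σ p.2)} = Set.univ := by
      ext x; simp [hp]
    rw [this]
    exact isOpen_univ

lemma isClosed_S (σ : Equiv.Perm (Fin m)) : IsClosed (S σ) := by
  rw [← isOpen_compl_iff]
  have : (S σ)ᶜ = ⋃ τ ∈ {τ : Equiv.Perm (Fin m) | τ ≠ σ}, S τ := by
    ext x
    simp only [Set.mem_compl_iff, Set.mem_iUnion, Set.mem_setOf_eq, exists_prop]
    constructor
    · intro hx
      obtain ⟨τ, hτ⟩ := exists_S x
      exact ⟨τ, fun h => hx (h ▸ hτ), hτ⟩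
    · rintro ⟨τ, hne, hτ⟩ hx
      exact hne (S_disjoint hτ hx)
  rw [this]
  exact isOpen_biUnion fun τ _ => isOpen_S τ


/-- The open simplex of angle vectors ordered by `σ`. -/
def E (σ : Equiv.Perm (Fin m)) : Set (Fin m → ℝ) :=
  {v | StrictMono (v ∘ σ) ∧ ∀ i, v i ∈ Set.Ioo 0 (2 * π)}

lemma convex_E (σ : Equiv.Perm (Fin m)) : Convex ℝ (E σ) := by
  have h1 : Convex ℝ {v : Fin m → ℝ | StrictMono (v ∘ σ)} := by
    have : {v : Fin m → ℝ | StrictMono (v ∘ σ)} = ⋂ p : Fin m × Fin m,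
        {v : Fin m → ℝ | p.1 < p.2 → v (σ p.1) < v (σ p.2)} := by
      ext v
      simp only [Set.mem_iInter, Set.mem_setOf_eq]
      exact ⟨fun h p hp => h hp, fun h a b hab => h (a, b) hab⟩
    rw [this]
    apply convex_iInter
    intro p
    by_cases hp : p.1 < p.2
    · have : {v : Fin m → ℝ | p.1 < p.2 → v (σ p.1) < v (σ p.2)} =
          ((LinearMap.proj (σ p.2) : (Fin m → ℝ) →ₗ[ℝ] ℝ) -
            (LinearMap.proj (σ p.1) : (Fin m → ℝ) →ₗ[ℝ] ℝ)) ⁻¹' Set.Ioi 0 := by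
        ext v
        simp [hp, sub_pos]
      rw [this]
      exact (convex_Ioi (0:ℝ)).linear_preimage _
    · have : {v : Fin m → ℝ | p.1 < p.2 → v (σ p.1) < v (σ p.2)} = Set.univ := by
        ext v; simp [hp]
      rw [this]; exact convex_univ
  have h2 : Convex ℝ {v : Fin m → ℝ | ∀ i, v i ∈ Set.Ioo 0 (2 * π)} := by
    have : {v : Fin m → ℝ | ∀ i, v i ∈ Set.Ioo 0 (2 * π)} =
        ⋂ i, (LinearMap.proj i : (Fin m → ℝ) →ₗ[ℝ] ℝ) ⁻¹' Set.Ioo 0 (2 * π) := by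
      ext v; simp
    rw [this]
    exact convex_iInter fun i => (convex_Ioo _ _).linear_preimage _
  exact h1.inter h2

/-- An explicit point in `E σ`. -/
noncomputable def v0 (σ : Equiv.Perm (Fin m)) : Fin m → ℝ :=
  fun i => ((σ.symm i : ℕ) + 1) * (2 * π / (m + 1))

lemma v0_mem (σ : Equiv.Perm (Fin m)) : v0 σ ∈ E σ := by
  have hd : 0 < 2 * π / (m + 1) := by positivity
  constructor
  · intro i j hij
    simp only [Function.comp_apply, v0, Equiv.symm_apply_apply]
    apply mul_lt_mul_of_pos_right _ hd
    have h : (i : ℕ) < (j : ℕ) := hij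
    have := (Nat.cast_lt (α := ℝ)).2 h
    linarith
  · intro i
    constructor
    · apply mul_pos _ hd
      positivity
    · have hlt : ((σ.symm i : ℕ) : ℝ) + 1 < (m : ℝ) + 1 := by
        have h : (σ.symm i : ℕ) < m := (σ.symm i).isLt
        have := (Nat.cast_lt (α := ℝ)).2 h
        linarith
      calc ((σ.symm i : ℕ) + 1 : ℝ) * (2 * π / (m + 1))
          < ((m : ℝ) + 1) * (2 * π / (m + 1)) := by
            exact mul_lt_mul_of_pos_right hlt hd
        _ = 2 * π := by
            field_simp
  
lemma cons_injective {z : Circle} {v : Fin m → ℝ} (hv : Function.Injective v)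
    (hmem : ∀ i, v i ∈ Set.Ioo 0 (2 * π)) :
    Function.Injective (Fin.cons z (fun i => z * Circle.exp (v i)) : Fin (m+1) → Circle) := by
  intro a b hab
  induction a using Fin.cases with
  | zero =>
    induction b using Fin.cases with
    | zero => rfl
    | succ j =>
      exfalso
      simp only [Fin.cons_zero, Fin.cons_succ] at hab
      exact exp_ne_one (hmem j) (left_eq_mul.1 hab)
  | succ i =>
    induction b using Fin.cases with
    | zero =>
      exfalso
      simp only [Fin.cons_zero, Fin.cons_succ] at hab
      exact exp_ne_one (hmem i) (left_eq_mul.1 hab.symm)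
    | succ j =>
      simp only [Fin.cons_succ] at hab
      have h1 : Circle.exp (v i) = Circle.exp (v j) := mul_left_cancel hab
      have h2 : v i = v j := by
        rw [← g_exp (hmem i), ← g_exp (hmem j), h1]
      rw [hv h2]

lemma t_cons {z : Circle} {v : Fin m → ℝ} (hv : Function.Injective v)
    (hmem : ∀ i, v i ∈ Set.Ioo 0 (2 * π)) (i : Fin m) :
    t (⟨Fin.cons z (fun i => z * Circle.exp (v i)), cons_injective hv hmem⟩ :
      {x : Fin (m+1) → Circle // Function.Injective x}) i = v i := by
  rw [t]
  rw [show (⟨Fin.cons z (fun i => z * Circle.exp (v i)), cons_injective hv hmem⟩ :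
      {x : Fin (m+1) → Circle // Function.Injective x}).1 = Fin.cons z
      (fun i => z * Circle.exp (v i)) from rfl]
  rw [Fin.cons_succ, Fin.cons_zero, mul_div_cancel_left]
  exact g_exp (hmem i)


lemma v_injective {σ : Equiv.Perm (Fin m)} {v : Fin m → ℝ} (hv : StrictMono (v ∘ σ)) :
    Function.Injective v := by
  intro a b hab
  have : (v ∘ σ) (σ.symm a) = (v ∘ σ) (σ.symm b) := by
    simp only [Function.comp_apply, Equiv.apply_symm_apply]
    exact hab
  have := hv.injective this
  simpa using congrArg σ this

instance : ConnectedSpace Circle := by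
  apply Function.Surjective.connectedSpace (f := (Circle.exp : C(ℝ, Circle)))
  · exact fun z => ⟨Complex.arg z, Circle.exp_arg z⟩
  · exact Circle.exp.continuous

/-- The chart map from `Circle × E σ` onto the chamber `S σ`. -/
noncomputable def Ψ (σ : Equiv.Perm (Fin m)) (p : Circle × (E σ (m := m))) :
    {x : Fin (m+1) → Circle // Function.Injective x} :=
  ⟨Fin.cons p.1 (fun i => p.1 * Circle.exp (p.2.1 i)),
    cons_injective (v_injective p.2.2.1) p.2.2.2⟩

lemma t_Psi (σ : Equiv.Perm (Fin m)) (p : Circle × (E σ (m := m))) (i : Fin m) :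
    t (Ψ σ p) i = p.2.1 i :=
  t_cons (v_injective p.2.2.1) p.2.2.2 i

lemma continuous_Psi (σ : Equiv.Perm (Fin m)) : Continuous (Ψ σ) := by
  apply Continuous.subtype_mk
  apply continuous_pi
  intro j
  refine Fin.cases ?_ ?_ j
  · simp only [Ψ, Fin.cons_zero]
    exact continuous_fst
  · intro i
    simp only [Ψ, Fin.cons_succ]
    exact continuous_fst.mul (Circle.exp.continuous.comp
      ((continuous_apply i).comp (continuous_subtype_val.comp continuous_snd)))

lemma range_Psi (σ : Equiv.Perm (Fin m)) : Set.range (Ψ σ) = S σ := by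
  apply Set.Subset.antisymm
  · rintro x ⟨p, rfl⟩
    show StrictMono fun i => t (Ψ σ p) (σ i)
    have heq : (fun i => t (Ψ σ p) (σ i)) = fun i => p.2.1 (σ i) :=
      funext fun i => t_Psi σ p (σ i)
    rw [heq]
    exact p.2.2.1
  · intro x hx
    have hmemE : t x ∈ E σ := ⟨hx, t_mem x⟩
    refine ⟨(x.1 0, ⟨t x, hmemE⟩), ?_⟩
    apply Subtype.ext
    funext j
    refine Fin.cases ?_ ?_ j
    · show (Ψ σ (x.1 0, ⟨t x, hmemE⟩)).1 0 = x.1 0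
      simp only [Ψ, Fin.cons_zero]
    · intro i
      show (Ψ σ (x.1 0, ⟨t x, hmemE⟩)).1 i.succ = x.1 i.succ
      simp only [Ψ, Fin.cons_succ]
      rw [t, exp_g, mul_comm, div_mul_cancel]

lemma isConnected_S (σ : Equiv.Perm (Fin m)) : IsConnected (S σ) := by
  haveI : ConnectedSpace (E σ (m := m)) := by
    apply Subtype.connectedSpace
    exact ⟨⟨v0 σ, v0_mem σ⟩, (convex_E σ).isPreconnected⟩
  rw [← range_Psi σ]
  exact isConnected_range (continuous_Psi σ)

lemma connectedComponent_eq_S {σ : Equiv.Perm (Fin m)}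
    {x : {x : Fin (m+1) → Circle // Function.Injective x}} (hx : x ∈ S σ) :
    connectedComponent x = S σ :=
  Set.Subset.antisymm
    (IsClopen.connectedComponent_subset ⟨isClosed_S σ, isOpen_S σ⟩ hx)
    ((isConnected_S σ).isPreconnected.subset_connectedComponent hx)

lemma card_components (m : ℕ) :
    Nat.card (ConnectedComponents {x : Fin (m+1) → Circle // Function.Injective x}) =
      Nat.factorial m := by
  classical
  have hpt : ∀ σ : Equiv.Perm (Fin m), (isConnected_S σ).nonempty.some ∈ S σ :=
    fun σ => (isConnected_S σ).nonempty.some_mem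
  set pt : Equiv.Perm (Fin m) → {x : Fin (m+1) → Circle // Function.Injective x} :=
    fun σ => (isConnected_S σ).nonempty.some with hptdef
  have hbij : Function.Bijective
      (fun σ : Equiv.Perm (Fin m) => (ConnectedComponents.mk (pt σ))) := by
    constructor
    · intro σ τ h
      rw [ConnectedComponents.coe_eq_coe] at h
      rw [connectedComponent_eq_S (hpt σ), connectedComponent_eq_S (hpt τ)] at h
      exact S_disjoint (hpt σ) ((Set.ext_iff.mp h (pt σ)).mp (hpt σ))
    · intro c
      obtain ⟨x, rfl⟩ := ConnectedComponents.surjective_coe c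
      obtain ⟨σ, hσ⟩ := exists_S x
      refine ⟨σ, ?_⟩
      rw [ConnectedComponents.coe_eq_coe, connectedComponent_eq_S (hpt σ),
        connectedComponent_eq_S hσ]
  rw [← Nat.card_eq_of_bijective _ hbij]
  simp [Nat.card_eq_fintype_card, Fintype.card_perm, Fintype.card_fin]

end CircleCfg

/-- The ordered configuration space of `n` labeled points on the unit circle,
i.e. the subspace of injective tuples `x : Fin n → Circle`, has exactly
`(n-1)!` connected components. -/
theorem circle_configuration_components (n : ℕ) (hn : 1 ≤ n) :
    Nat.card (ConnectedComponents {x : Fin n → Circle // Function.Injective x}) =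
      Nat.factorial (n - 1) := by
  obtain ⟨m, rfl⟩ : ∃ m, n = m + 1 := ⟨n - 1, (Nat.succ_pred_eq_of_pos hn).symm⟩
  simpa using CircleCfg.card_components m
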